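/- For every real number Z with Z ≠ 1 and Z ≠ -1 and every natural number T, the sum Z̄(Z,T) = ∑_{t=0}^{T-1} (∑_{i=0}^{t-1} Z^{t-i-1})^2 equals T/(1-Z)^2 + (Z^T - 1)(Z^T - 2Z - 1)/((Z-1)^3 (1+Z)). -/

import Mathlib

lemma inner_geom (Z : ℝ) (hZ1 : Z ≠ 1) (t : ℕ) :
    ∑ i ∈ Finset.range t, Z ^ (t - i - 1) = (Z ^ t - 1) / (Z - 1) := by
  have h : ∀ i ∈ Finset.range t, Z ^ (t - i - 1) = Z ^ (t - 1 - i) := by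
    intro i hi; congr 1; omega
  rw [Finset.sum_congr rfl h, Finset.sum_range_reflect (fun j => Z ^ j) t]
  exact geom_sum_eq hZ1 t

/-- **Closed form of Z̄.** For every real `Z` with `Z ≠ 1` and `Z ≠ -1` and natural `T`,
`Z̄(Z,T) = ∑_{t=0}^{T-1} (∑_{i=0}^{t-1} Z^{t-i-1})^2
       = T/(1-Z)^2 + (Z^T - 1)(Z^T - 2Z - 1)/((Z-1)^3 (1+Z))`. -/
theorem zbar_closed_form (Z : ℝ) (hZ1 : Z ≠ 1) (hZ2 : Z ≠ -1) (T : ℕ) :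
    ∑ t ∈ Finset.range T, (∑ i ∈ Finset.range t, Z ^ (t - i - 1)) ^ 2
      = (T : ℝ) / (1 - Z) ^ 2
        + (Z ^ T - 1) * (Z ^ T - 2 * Z - 1) / ((Z - 1) ^ 3 * (1 + Z)) := by
  have h1 : Z - 1 ≠ 0 := sub_ne_zero.mpr hZ1
  have h2 : (1 : ℝ) + Z ≠ 0 := by
    intro h; apply hZ2; linarith
  have h3 : (1 : ℝ) - Z ≠ 0 := by
    intro h; apply hZ1; linarith
  induction T with
  | zero => simp
  | succ n ih =>
    rw [Finset.sum_range_succ, ih, inner_geom Z hZ1, pow_succ]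
    push_cast
    field_simp
    ring
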